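/- Let R be a commutative Frobenius ring (or more concretely, a finite commutative ring where the dual of a free rank-k submodule of R^{2k} has the complementary cardinality), n ≥ 1, and let A, B, C, D be λ-circulant n×n matrices over R satisfying A·Aᵀ + B·Bᵀ + C·Cᵀ + D·Dᵀ = -I_n and A·Bᵀ - B·Aᵀ - C·Dᵀ + D·Cᵀ = 0. Then the linear code of length 8n generated by G = (I_{4n} | M), where M is the block matrix with rows (A, B, CJ, DJ), (-B, A, DJ, -CJ), (-CJ, -DJ, A, B), (-DJ, CJ, -B, A), is self-orthogonal: every two rows of G have Euclidean inner product 0. -/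

import Mathlib

open Matrix Polynomial

/-- The `l`-circulant matrix with first row `a`: each row is the `l`-cyclic
shift of the previous one (last entry wraps to the front multiplied by `l`). -/
def lamCirc {R : Type*} [CommRing R] (n : ℕ) (l : R) (a : Fin n → R) :
    Matrix (Fin n) (Fin n) R :=
  fun i j =>
    if h : (i : ℕ) ≤ (j : ℕ) then a ⟨(j : ℕ) - (i : ℕ), by have := j.isLt; omega⟩
    else l * a ⟨n + (j : ℕ) - (i : ℕ), by have := i.isLt; have := j.isLt; omega⟩

/-- `A` is an `l`-circulant matrix. -/
def IsLamCirc {R : Type*} [CommRing R] (n : ℕ) (l : R) (A : Matrix (Fin n) (Fin n) R) : Prop :=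
  ∃ a : Fin n → R, A = lamCirc n l a

/-- The back-diagonal permutation matrix `J` with `J_{i, n-i+1} = 1` (1-indexed). -/
def backDiag {R : Type*} [CommRing R] (n : ℕ) : Matrix (Fin n) (Fin n) R :=
  fun i j => if (i : ℕ) + (j : ℕ) + 1 = n then 1 else 0

section Aux

variable {R : Type*} [CommRing R] {n : ℕ}

lemma backDiag_transpose' : (backDiag n (R := R))ᵀ = backDiag n := by
  ext i j
  simp only [transpose_apply, backDiag]
  congr 1
  simp [eq_iff_iff]; omega

lemma backDiag_mul_self' : backDiag n * backDiag n = (1 : Matrix (Fin n) (Fin n) R) := by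
  ext i j
  rw [mul_apply]
  rcases Nat.eq_zero_or_pos n with h | h
  · exact absurd i.isLt (by omega)
  rw [Finset.sum_eq_single (⟨n - 1 - i, by omega⟩ : Fin n)]
  · simp only [backDiag, one_apply]
    have hi := i.isLt; have hj := j.isLt
    split_ifs with h1 h2 h3 h4 h5 <;> simp_all <;> omega
  · intro b _ hb
    have : ¬ ((i : ℕ) + b + 1 = n) := by
      intro hc; exact hb (by apply Fin.ext; simp; omega)
    simp [backDiag, this]
  · intro hb; exact absurd (Finset.mem_univ _) hb

lemma mul_backDiag_apply' (A : Matrix (Fin n) (Fin n) R) (i j : Fin n) :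
    (A * backDiag n : Matrix (Fin n) (Fin n) R) i j
      = A i ⟨n - 1 - j, by have := i.isLt; have := j.isLt; omega⟩ := by
  rw [mul_apply]
  rw [Finset.sum_eq_single (⟨n - 1 - j, by have := i.isLt; have := j.isLt; omega⟩ : Fin n)]
  · have hj := j.isLt
    simp [backDiag]
    omega
  · intro b _ hb
    have : ¬ ((b : ℕ) + j + 1 = n) := by
      intro hc; exact hb (by apply Fin.ext; simp; omega)
    simp [backDiag, this]
  · intro hb; exact absurd (Finset.mem_univ _) hb

lemma lamCirc_mul_backDiag' (l : R) (a : Fin n → R) :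
    lamCirc n l a * backDiag n = backDiag n * (lamCirc n l a)ᵀ := by
  have hsymm : ∀ i j : Fin n, (lamCirc n l a * backDiag n : Matrix (Fin n) (Fin n) R) i j
      = (lamCirc n l a * backDiag n : Matrix (Fin n) (Fin n) R) j i := by
    intro i j
    rw [mul_backDiag_apply', mul_backDiag_apply']
    have hi := i.isLt; have hj := j.isLt
    simp only [lamCirc]
    split_ifs with h1 h2 h3
    · congr 1; apply Fin.ext; simp; omega
    · omega
    · omega
    · congr 1; congr 1; apply Fin.ext; simp; omega
  calc lamCirc n l a * backDiag n
      = (lamCirc n l a * backDiag n)ᵀ := by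
        ext i j; rw [transpose_apply]; exact hsymm i j
    _ = backDiag n * (lamCirc n l a)ᵀ := by
        rw [transpose_mul, backDiag_transpose']

lemma lamCirc_apply_mod' (l : R) (a : Fin n → R) (hn : 0 < n) (i j : Fin n) :
    lamCirc n l a i j
      = (if (i : ℕ) ≤ (j : ℕ) then 1 else l) * a ⟨(n + (j : ℕ) - i) % n, Nat.mod_lt _ hn⟩ := by
  have hi := i.isLt; have hj := j.isLt
  simp only [lamCirc]
  split_ifs with h
  · rw [one_mul]
    congr 1
    apply Fin.ext
    simp only
    rw [show n + (j : ℕ) - i = ((j : ℕ) - i) + n by omega, Nat.add_mod_right,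
      Nat.mod_eq_of_lt (by omega)]
  · congr 2
    apply Fin.ext
    simp only
    rw [Nat.mod_eq_of_lt (by omega)]

lemma lamCirc_mul_comm' (l : R) (a b : Fin n → R) :
    lamCirc n l a * lamCirc n l b = lamCirc n l b * lamCirc n l a := by
  ext i j
  have hi := i.isLt; have hj := j.isLt
  have hn : 0 < n := by omega
  rw [mul_apply, mul_apply]
  set e : Fin n → Fin n := fun k =>
    if h : (k : ℕ) ≤ (i : ℕ) + j then
      (if h2 : (i : ℕ) + j - k < n then ⟨(i : ℕ) + j - k, h2⟩
       else ⟨(i : ℕ) + j - k - n, by have := k.isLt; omega⟩)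
    else ⟨(i : ℕ) + j + n - k, by have := k.isLt; omega⟩ with he
  have hv : ∀ k : Fin n, ((e k : ℕ) + k = i + j ∨ (e k : ℕ) + k = i + j + n
      ∨ (e k : ℕ) + k + n = (i : ℕ) + j) := by
    intro k
    have hk := k.isLt
    simp only [he]
    split_ifs <;> simp <;> omega
  have hinv : Function.Involutive e := by
    intro k
    have hk := k.isLt
    have h1 := hv k
    have h2 := hv (e k)
    have hek := (e k).isLt
    have heek := (e (e k)).isLt
    apply Fin.ext
    omega
  apply Finset.sum_bijective e hinv.bijective (by simp)
  intro k _
  have hk := k.isLt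
  have hm := hv k
  have hek := (e k).isLt
  rw [lamCirc_apply_mod' l a hn, lamCirc_apply_mod' l b hn,
    lamCirc_apply_mod' l b hn, lamCirc_apply_mod' l a hn]
  have harg1 : (n + ((e k : Fin n) : ℕ) - i) % n = (n + (j : ℕ) - k) % n := by
    have : n + ((e k : Fin n) : ℕ) - i = n + (j : ℕ) - k
        ∨ n + ((e k : Fin n) : ℕ) - i = (n + (j : ℕ) - k) + n
        ∨ (n + ((e k : Fin n) : ℕ) - i) + n = n + (j : ℕ) - k := by omega
    rcases this with h | h | h
    · rw [h]
    · rw [h, Nat.add_mod_right]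
    · rw [← h, Nat.add_mod_right]
  have harg2 : (n + (j : ℕ) - (e k : Fin n)) % n = (n + (k : ℕ) - i) % n := by
    have : n + (j : ℕ) - (e k : Fin n) = n + (k : ℕ) - i
        ∨ n + (j : ℕ) - (e k : Fin n) = (n + (k : ℕ) - i) + n
        ∨ (n + (j : ℕ) - (e k : Fin n)) + n = n + (k : ℕ) - i := by omega
    rcases this with h | h | h
    · rw [h]
    · rw [h, Nat.add_mod_right]
    · rw [← h, Nat.add_mod_right]
  have f1 : (⟨(n + ((e k : Fin n) : ℕ) - i) % n, Nat.mod_lt _ hn⟩ : Fin n)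
      = ⟨(n + (j : ℕ) - k) % n, Nat.mod_lt _ hn⟩ := Fin.ext harg1
  have f2 : (⟨(n + (j : ℕ) - (e k : Fin n)) % n, Nat.mod_lt _ hn⟩ : Fin n)
      = ⟨(n + (k : ℕ) - i) % n, Nat.mod_lt _ hn⟩ := Fin.ext harg2
  rw [f1, f2]
  split_ifs <;> first | ring1 | (exfalso; omega)

end Aux

/-- Construction I: the code generated by (I | M) is self-orthogonal. -/
theorem construction_I_self_orthogonal {R : Type*} [CommRing R] {n : ℕ} (hn : 1 ≤ n) (l : R)
    (A B C D : Matrix (Fin n) (Fin n) R)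
    (hA : IsLamCirc n l A) (hB : IsLamCirc n l B)
    (hC : IsLamCirc n l C) (hD : IsLamCirc n l D)
    (h1 : A * Aᵀ + B * Bᵀ + C * Cᵀ + D * Dᵀ = -1)
    (h2 : A * Bᵀ - B * Aᵀ - C * Dᵀ + D * Cᵀ = 0) :
    let J : Matrix (Fin n) (Fin n) R := backDiag n
    let M : Matrix ((Fin n ⊕ Fin n) ⊕ (Fin n ⊕ Fin n)) ((Fin n ⊕ Fin n) ⊕ (Fin n ⊕ Fin n)) R :=
      Matrix.fromBlocks
        (Matrix.fromBlocks A B (-B) A)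
        (Matrix.fromBlocks (C * J) (D * J) (D * J) (-(C * J)))
        (Matrix.fromBlocks (-(C * J)) (-(D * J)) (-(D * J)) (C * J))
        (Matrix.fromBlocks A B (-B) A)
    let G := Matrix.fromCols (1 : Matrix ((Fin n ⊕ Fin n) ⊕ (Fin n ⊕ Fin n)) ((Fin n ⊕ Fin n) ⊕ (Fin n ⊕ Fin n)) R) M
    ∀ i j, ∑ k, G i k * G j k = 0 := by
  intro J M G i j
  have hJJ : J * Jᵀ = (1 : Matrix (Fin n) (Fin n) R) := by
    show backDiag n * (backDiag n)ᵀ = 1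
    rw [backDiag_transpose', backDiag_mul_self']
  have hswap : ∀ X Y : Matrix (Fin n) (Fin n) R, IsLamCirc n l X → IsLamCirc n l Y →
      X * (Y * J)ᵀ = (Y * J) * Xᵀ := by
    rintro X Y ⟨x, rfl⟩ ⟨y, rfl⟩
    show lamCirc n l x * (lamCirc n l y * backDiag n)ᵀ
      = lamCirc n l y * backDiag n * (lamCirc n l x)ᵀ
    rw [transpose_mul, backDiag_transpose']
    rw [← lamCirc_mul_backDiag']
    rw [← Matrix.mul_assoc, lamCirc_mul_comm' l x y, Matrix.mul_assoc,
      lamCirc_mul_backDiag' l x, ← Matrix.mul_assoc]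
  have hJmul : ∀ X Y : Matrix (Fin n) (Fin n) R,
      (X * J) * (Y * J)ᵀ = X * Yᵀ := by
    intro X Y
    rw [transpose_mul]
    have : (X * J) * (Jᵀ * Yᵀ) = X * (J * Jᵀ) * Yᵀ := by noncomm_ring
    rw [this, hJJ, Matrix.mul_one]
  have key : M * Mᵀ = -1 := by
    show Matrix.fromBlocks _ _ _ _ * (Matrix.fromBlocks _ _ _ _)ᵀ = -1
    have hPP : (fromBlocks A B (-B) A) * (fromBlocks A B (-B) A)ᵀ
        + (fromBlocks (C * J) (D * J) (D * J) (-(C * J)))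
          * (fromBlocks (C * J) (D * J) (D * J) (-(C * J)))ᵀ
        = -1 := by
      rw [fromBlocks_transpose, fromBlocks_multiply, fromBlocks_transpose, fromBlocks_multiply,
        fromBlocks_add, ← Matrix.fromBlocks_one, fromBlocks_neg, neg_zero,
        Matrix.fromBlocks_inj]
      refine ⟨?_, ?_, ?_, ?_⟩
      · rw [hJmul C C, hJmul D D, ← h1]; abel
      · simp only [transpose_neg, Matrix.mul_neg, Matrix.neg_mul]
        rw [hJmul C D, hJmul D C]
        trans -(A * Bᵀ - B * Aᵀ - C * Dᵀ + D * Cᵀ)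
        · abel
        · rw [h2, neg_zero]
      · simp only [transpose_neg, Matrix.mul_neg, Matrix.neg_mul]
        rw [hJmul D C, hJmul C D]
        trans (A * Bᵀ - B * Aᵀ - C * Dᵀ + D * Cᵀ)
        · abel
        · exact h2
      · simp only [transpose_neg, Matrix.mul_neg, Matrix.neg_mul, neg_neg]
        rw [hJmul D D, hJmul C C, ← h1]; abel
    have hQP : (fromBlocks (C * J) (D * J) (D * J) (-(C * J))) * (fromBlocks A B (-B) A)ᵀ
        = (fromBlocks A B (-B) A)
          * (fromBlocks (C * J) (D * J) (D * J) (-(C * J)))ᵀ := by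
      rw [fromBlocks_transpose, fromBlocks_transpose, fromBlocks_multiply, fromBlocks_multiply, Matrix.fromBlocks_inj]
      have s1 := hswap A C hA hC
      have s2 := hswap A D hA hD
      have s3 := hswap B C hB hC
      have s4 := hswap B D hB hD
      refine ⟨?_, ?_, ?_, ?_⟩
      · rw [s1, s4]
      · simp only [transpose_neg, Matrix.mul_neg, Matrix.neg_mul]
        rw [s2, s3]
        try abel
      · simp only [transpose_neg, Matrix.mul_neg, Matrix.neg_mul]
        rw [s2, s3]
        try abel
      · simp only [transpose_neg, Matrix.mul_neg, Matrix.neg_mul]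
        rw [s1, s4]
        try abel
    rw [show Matrix.fromBlocks (-(C * J)) (-(D * J)) (-(D * J)) (C * J)
        = -(Matrix.fromBlocks (C * J) (D * J) (D * J) (-(C * J))) by
      rw [fromBlocks_neg, neg_neg]]
    rw [fromBlocks_transpose, fromBlocks_multiply]
    rw [show (-1 : Matrix ((Fin n ⊕ Fin n) ⊕ (Fin n ⊕ Fin n))
        ((Fin n ⊕ Fin n) ⊕ (Fin n ⊕ Fin n)) R)
        = fromBlocks (-1) 0 0 (-1) by rw [← Matrix.fromBlocks_one, fromBlocks_neg, neg_zero]]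
    rw [Matrix.fromBlocks_inj]
    refine ⟨?_, ?_, ?_, ?_⟩
    · exact hPP
    · simp only [transpose_neg, Matrix.mul_neg, Matrix.neg_mul]
      rw [hQP]
      try abel
    · simp only [transpose_neg, Matrix.mul_neg, Matrix.neg_mul]
      rw [hQP]
      try abel
    · simp only [transpose_neg, Matrix.mul_neg, Matrix.neg_mul, neg_neg]
      rw [← hPP]
      try abel
  have hG : G * Gᵀ = 0 := by
    show Matrix.fromCols 1 M * (Matrix.fromCols 1 M)ᵀ = 0
    rw [transpose_fromCols, fromCols_mul_fromRows, key, transpose_one, Matrix.mul_one]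
    exact add_neg_cancel 1
  calc ∑ k, G i k * G j k = (G * Gᵀ) i j := by
        rw [Matrix.mul_apply]
        simp [Matrix.transpose_apply]
    _ = 0 := by rw [hG]; rfl
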